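/- Let g be a real semisimple Lie algebra with Iwasawa decomposition data as above, α a simple root, and ξ ∈ g_α with ⟨ξ,ξ⟩ = 1. The trace of the second fundamental form of the subgroup S_ξ with Lie algebra s_ξ = ker α ⊕ (n ⊖ ℝξ) in AN at the identity equals (dim g_α + 2 dim g_{2α} - 1) H_α; that is, Σ_i II(e_i,e_i) = (dim g_α + 2 dim g_{2α} - 1) H_α for any orthonormal basis {e_i} of s_ξ with respect to ⟨·,·⟩_{AN}. -/

import Mathlib

/-- The inner product `⟨X,Y⟩ = -B(X, θY)` associated with a Cartan involution `θ`. -/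
noncomputable def cip (L : Type*) [LieRing L] [LieAlgebra ℝ L]
    (θ : L →ₗ⁅ℝ⁆ L) (X Y : L) : ℝ :=
  -(killingForm ℝ L X (θ Y))

/-- The left-invariant metric of `AN`. -/
noncomputable def cipAN (L : Type*) [LieRing L] [LieAlgebra ℝ L]
    (θ : L →ₗ⁅ℝ⁆ L) (Pa Pn : L →ₗ[ℝ] L) (X Y : L) : ℝ :=
  cip L θ (Pa X) (Pa Y) + (1 / 2) * cip L θ (Pn X) (Pn Y)

open Module

section bilin
variable {L : Type*} [LieRing L] [LieAlgebra ℝ L] (θ : L →ₗ⁅ℝ⁆ L) (Pa Pn : L →ₗ[ℝ] L)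

lemma cip_bilin : ∃ b : L →ₗ[ℝ] L →ₗ[ℝ] ℝ, ∀ x y, b x y = cip L θ x y := by
  refine ⟨LinearMap.mk₂ ℝ (cip L θ) ?_ ?_ ?_ ?_, fun x y => rfl⟩
  · intro x y z; simp [cip]; try ring
  · intro r x y; simp [cip]; try ring
  · intro x y z; simp [cip]; try ring
  · intro r x y; simp [cip]; try ring

lemma cipAN_bilin : ∃ b : L →ₗ[ℝ] L →ₗ[ℝ] ℝ, ∀ x y, b x y = cipAN L θ Pa Pn x y := by
  refine ⟨LinearMap.mk₂ ℝ (cipAN L θ Pa Pn) ?_ ?_ ?_ ?_, fun x y => rfl⟩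
  · intro x y z; simp [cipAN, cip]; try ring
  · intro r x y; simp [cipAN, cip]; try ring
  · intro x y z; simp [cipAN, cip]; try ring
  · intro r x y; simp [cipAN, cip]; try ring

end bilin

/-- Existence of an orthonormal generating family of a submodule w.r.t. a positive
definite symmetric bilinear form. -/
lemma exists_orthonormal_family {L : Type*} [AddCommGroup L] [Module ℝ L]
    [FiniteDimensional ℝ L] (φ : L →ₗ[ℝ] L →ₗ[ℝ] ℝ)
    (hsym : ∀ x y, φ x y = φ y x) (W : Submodule ℝ L)
    (hpos : ∀ x ∈ W, x ≠ 0 → 0 < φ x x) :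
    ∃ f : Fin (finrank ℝ W) → L, (∀ j, f j ∈ W) ∧
      (∀ j k, φ (f j) (f k) = if j = k then 1 else 0) ∧
      Submodule.span ℝ (Set.range f) = W := by
  letI core : InnerProductSpace.Core ℝ ↥W :=
    { inner := fun x y => φ x.1 y.1
      conj_inner_symm := fun x y => by simpa using hsym y.1 x.1
      re_inner_nonneg := fun x => by
        rcases eq_or_ne (x : L) 0 with h | h
        · simp [h]
        · exact le_of_lt (by simpa using hpos x.1 x.2 h)
      add_left := fun x y z => by simp
      smul_left := fun x y r => by simp [mul_comm]
      definite := fun x hx => by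
        by_contra h
        have hx0 : (x : L) ≠ 0 := fun h0 => h (Subtype.ext h0)
        have := hpos x.1 x.2 hx0
        rw [show φ x.1 x.1 = 0 from hx] at this
        exact lt_irrefl _ this }
  letI : NormedAddCommGroup ↥W := @InnerProductSpace.Core.toNormedAddCommGroup ℝ ↥W _ _ _ core
  letI : InnerProductSpace ℝ ↥W := InnerProductSpace.ofCore core.toCore
  let b := stdOrthonormalBasis ℝ ↥W
  refine ⟨fun j => (b j : L), fun j => (b j).2, ?_, ?_⟩
  · intro j k
    have := b.orthonormal
    rw [orthonormal_iff_ite] at this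
    exact this j k
  · have hb : Submodule.span ℝ (Set.range (⇑b.toBasis)) = (⊤ : Submodule ℝ ↥W) :=
      b.toBasis.span_eq
    have : Set.range (fun j => (b j : L)) = W.subtype '' Set.range ⇑b.toBasis := by
      ext x; simp [Set.range_comp]
    rw [this, Submodule.span_image, b.toBasis.span_eq, Submodule.map_subtype_top]

/-- Invariance of the trace of a bilinear map under change of orthonormal generating family. -/
lemma trace_orthonormal_change {L M : Type*} [AddCommGroup L] [Module ℝ L]
    [AddCommGroup M] [Module ℝ M]
    (ip : L →ₗ[ℝ] L →ₗ[ℝ] ℝ) (hsym : ∀ x y, ip x y = ip y x)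
    (Φ : L →ₗ[ℝ] L →ₗ[ℝ] M)
    {ι κ : Type*} [Fintype ι] [Fintype κ] [DecidableEq ι] [DecidableEq κ]
    (e : ι → L) (f : κ → L)
    (he : ∀ i j, ip (e i) (e j) = if i = j then 1 else 0)
    (hf : ∀ i j, ip (f i) (f j) = if i = j then 1 else 0)
    (hef : ∀ i, e i ∈ Submodule.span ℝ (Set.range f))
    (hfe : ∀ j, f j ∈ Submodule.span ℝ (Set.range e)) :
    ∑ i, Φ (e i) (e i) = ∑ j, Φ (f j) (f j) := by
  classical
  choose c hc using fun i => (Submodule.mem_span_range_iff_exists_fun ℝ).mp (hef i)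
  choose g hg using fun j => (Submodule.mem_span_range_iff_exists_fun ℝ).mp (hfe j)
  have key1 : ∀ i j, ip (e i) (f j) = c i j := by
    intro i j
    rw [← hc i]
    simp [map_sum, LinearMap.sum_apply, map_smul, LinearMap.smul_apply, hf,
      Finset.sum_ite_eq', smul_eq_mul]
  have key2 : ∀ j i, ip (f j) (e i) = g j i := by
    intro j i
    rw [← hg j]
    simp [map_sum, LinearMap.sum_apply, map_smul, LinearMap.smul_apply, he,
      Finset.sum_ite_eq', smul_eq_mul]
  have key3 : ∀ j k, (∑ i, c i j * c i k) = if j = k then 1 else 0 := by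
    intro j k
    have h1 : ∀ i, c i j * c i k = g j i * (ip (f k) (e i)) := by
      intro i
      rw [← key1, ← key1, hsym (e i) (f j), hsym (e i) (f k), key2]
    calc ∑ i, c i j * c i k = ∑ i, g j i * (ip (f k) (e i)) :=
            Finset.sum_congr rfl fun i _ => h1 i
      _ = ip (f k) (∑ i, g j i • e i) := by
            simp [map_sum, map_smul, smul_eq_mul, Finset.mul_sum]
      _ = ip (f k) (f j) := by rw [hg j]
      _ = if j = k then 1 else 0 := by rw [hf]; simp [eq_comm]
  calc ∑ i, Φ (e i) (e i)
      = ∑ i, ∑ j, ∑ k, (c i j * c i k) • Φ (f j) (f k) := by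
        refine Finset.sum_congr rfl fun i _ => ?_
        rw [← hc i]
        simp only [map_sum, LinearMap.sum_apply, map_smul, LinearMap.smul_apply,
          Finset.smul_sum, smul_smul]
        rw [Finset.sum_comm]
        exact Finset.sum_congr rfl fun j _ => Finset.sum_congr rfl fun k _ => by
          rw [mul_comm]
    _ = ∑ j, ∑ k, (∑ i, c i j * c i k) • Φ (f j) (f k) := by
        rw [Finset.sum_comm]
        refine Finset.sum_congr rfl fun j _ => ?_
        rw [Finset.sum_comm]
        refine Finset.sum_congr rfl fun k _ => ?_
        rw [Finset.sum_smul]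
    _ = ∑ j, Φ (f j) (f j) := by
        refine Finset.sum_congr rfl fun j _ => ?_
        rw [Finset.sum_eq_single j]
        · rw [key3]; simp
        · intro k _ hk; rw [key3, if_neg (Ne.symm hk), zero_smul]
        · intro h; exact absurd (Finset.mem_univ j) h

/-- The trace of the second fundamental form (= mean curvature vector at the identity) of
the subgroup `S_ξ` with Lie algebra `s_ξ = ker α ⊕ (n ⊖ ℝξ)` in `AN`, computed with
respect to an `⟨·,·⟩_{AN}`-orthonormal basis of `s_ξ`, equals
`(dim g_α + 2 dim g_{2α} - 1) H_α`. -/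
theorem mean_curvature_of_s_xi
    (L : Type*) [LieRing L] [LieAlgebra ℝ L] [FiniteDimensional ℝ L]
    [LieAlgebra.IsSemisimple ℝ L]
    (θ : L →ₗ⁅ℝ⁆ L) (hθ : Function.Involutive θ)
    (hpos : ∀ X : L, X ≠ 0 → 0 < cip L θ X X)
    (a n : Submodule ℝ L)
    (hap : ∀ H ∈ a, θ H = -H)
    (habelian : ∀ H ∈ a, ∀ H' ∈ a, ⁅H, H'⁆ = 0)
    (hnn : ∀ X ∈ n, ∀ Y ∈ n, ⁅X, Y⁆ ∈ n)
    (han : ∀ H ∈ a, ∀ X ∈ n, ⁅H, X⁆ ∈ n)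
    (horthan : ∀ H ∈ a, ∀ X ∈ n, cip L θ H X = 0)
    (hsymm : ∀ X Y : L, cip L θ X Y = cip L θ Y X)
    -- positive restricted roots and root spaces
    (Sigp : Finset (L →ₗ[ℝ] ℝ))
    (gsp : (L →ₗ[ℝ] ℝ) → Submodule ℝ L)
    (hroot : ∀ lam ∈ Sigp, ∀ X ∈ gsp lam, ∀ H ∈ a, ⁅H, X⁆ = lam H • X)
    (hbot : ∀ lam : L →ₗ[ℝ] ℝ, lam ∉ Sigp → gsp lam = ⊥)
    (hn : n = Sigp.sup gsp)
    (horthroots : ∀ lam ∈ Sigp, ∀ mu ∈ Sigp, lam ≠ mu →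
      ∀ X ∈ gsp lam, ∀ Y ∈ gsp mu, cip L θ X Y = 0)
    -- metric duals of the roots
    (Hd : (L →ₗ[ℝ] ℝ) → L)
    (hHd : ∀ lam ∈ Sigp, Hd lam ∈ a ∧ ∀ H ∈ a, cip L θ (Hd lam) H = lam H)
    -- `(1-θ)[θX,X] = 2|X|²H_λ` for `X ∈ g_λ`
    (hbrD : ∀ lam ∈ Sigp, ∀ X ∈ gsp lam,
      ⁅θ X, X⁆ - θ ⁅θ X, X⁆ = (2 * cip L θ X X) • Hd lam)
    -- the simple root `α`, its dual `H_α`, and the unit vector `ξ ∈ g_α`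
    (αl : L →ₗ[ℝ] ℝ) (hαl : αl ∈ Sigp)
    (Hα : L) (hHα : Hα = Hd αl)
    (ξ : L) (hξ : ξ ∈ gsp αl) (hnorm : cip L θ ξ ξ = 1)
    -- the identity `2⟨δ,α⟩ = |α|²(dim g_α + 2 dim g_{2α})`
    (hdelta : cip L θ (∑ lam ∈ Sigp, (Module.finrank ℝ (gsp lam) : ℝ) • Hd lam) Hα =
      cip L θ Hα Hα *
        ((Module.finrank ℝ (gsp αl) : ℝ) +
          2 * (Module.finrank ℝ (gsp ((2 : ℝ) • αl)) : ℝ)))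
    -- projections defining the `AN`-metric
    (Pa Pn : L →ₗ[ℝ] L)
    (hPaa : ∀ x ∈ a, Pa x = x ∧ Pn x = 0)
    (hPnn : ∀ x ∈ n, Pn x = x ∧ Pa x = 0)
    (hPmem : ∀ x : L, Pa x ∈ a ∧ Pn x ∈ n)
    -- an orthonormal basis of `s_ξ = ker α ⊕ (n ⊖ ℝξ)` for the `AN`-metric
    (d : ℕ) (e : Fin d → L)
    (he : ∀ i, e i ∈ (a ⊓ LinearMap.ker αl) ⊔
      (n ⊓ LinearMap.ker ((killingForm ℝ L).flip (θ ξ))))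
    (horthonormal : ∀ i j, cipAN L θ Pa Pn (e i) (e j) = if i = j then 1 else 0)
    (hspan : Submodule.span ℝ (Set.range e) =
      (a ⊓ LinearMap.ker αl) ⊔ (n ⊓ LinearMap.ker ((killingForm ℝ L).flip (θ ξ))))
    -- the second fundamental form of `S_ξ ⊆ AN` at the identity
    (II : L →ₗ[ℝ] L →ₗ[ℝ] L)
    (hIIval : ∀ X ∈ (a ⊓ LinearMap.ker αl) ⊔
        (n ⊓ LinearMap.ker ((killingForm ℝ L).flip (θ ξ))),
      II X X ∈ Submodule.span ℝ {Hα, ξ})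
    (hII : ∀ X ∈ (a ⊓ LinearMap.ker αl) ⊔
        (n ⊓ LinearMap.ker ((killingForm ℝ L).flip (θ ξ))),
      ∀ η ∈ Submodule.span ℝ {Hα, ξ},
      cipAN L θ Pa Pn (II X X) η = (1 / 4) * cip L θ (⁅θ X, X⁆ - θ ⁅θ X, X⁆) η) :
    ∑ i, II (e i) (e i) =
      (((Module.finrank ℝ (gsp αl) : ℝ) +
          2 * (Module.finrank ℝ (gsp ((2 : ℝ) • αl)) : ℝ)) - 1) • Hα := by
  classical
  obtain ⟨cipb, cipb_apply⟩ := cip_bilin (L := L) θ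
  obtain ⟨ipAN, ipAN_apply⟩ := cipAN_bilin (L := L) θ Pa Pn
  set K : Submodule ℝ L := LinearMap.ker ((killingForm ℝ L).flip (θ ξ)) with hKdef
  set W0 : Submodule ℝ L := a ⊓ LinearMap.ker αl with hW0def
  set V : Submodule ℝ L := W0 ⊔ (n ⊓ K) with hVdef
  -- basic facts
  have cip_zero_left : ∀ y : L, cip L θ 0 y = 0 := fun y => by simp [cip]
  have cip_zero_right : ∀ x : L, cip L θ x 0 = 0 := fun x => by simp [cip]
  have hgspn : ∀ lam ∈ Sigp, gsp lam ≤ n := fun lam h => hn ▸ Finset.le_sup h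
  have hξn : ξ ∈ n := hgspn αl hαl hξ
  have hHαa : Hα ∈ a := hHα ▸ (hHd αl hαl).1
  have hK : ∀ x : L, x ∈ K ↔ cip L θ x ξ = 0 := by
    intro x
    rw [hKdef, LinearMap.mem_ker]
    constructor
    · intro h
      have h' : (killingForm ℝ L) x (θ ξ) = 0 := h
      unfold cip
      rw [h', neg_zero]
    · intro h
      exact neg_eq_zero.mp h
  have cipAN_aa : ∀ x ∈ a, ∀ y ∈ a, cipAN L θ Pa Pn x y = cip L θ x y := by
    intro x hx y hy
    unfold cipAN
    rw [(hPaa x hx).1, (hPaa y hy).1, (hPaa x hx).2, (hPaa y hy).2, cip_zero_left]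
    ring
  have cipAN_nn : ∀ x ∈ n, ∀ y ∈ n, cipAN L θ Pa Pn x y = (1 / 2) * cip L θ x y := by
    intro x hx y hy
    unfold cipAN
    rw [(hPnn x hx).1, (hPnn y hy).1, (hPnn x hx).2, (hPnn y hy).2, cip_zero_left]
    ring
  have cipAN_an : ∀ x ∈ a, ∀ y ∈ n, cipAN L θ Pa Pn x y = 0 := by
    intro x hx y hy
    unfold cipAN
    rw [(hPaa x hx).2, (hPnn y hy).2, cip_zero_right, cip_zero_left]
    ring
  have hANsymm : ∀ x y : L, cipAN L θ Pa Pn x y = cipAN L θ Pa Pn y x := by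
    intro x y
    unfold cipAN
    rw [hsymm (Pa x) (Pa y), hsymm (Pn x) (Pn y)]
  -- root spaces other than αl are in K
  have hWlK : ∀ lam ∈ Sigp, lam ≠ αl → gsp lam ≤ K := by
    intro lam hlam hne x hx
    exact (hK x).mpr (horthroots lam hlam αl hαl hne x hx ξ hξ)
  have hWl_eq : ∀ lam ∈ Sigp, lam ≠ αl → gsp lam ⊓ K = gsp lam :=
    fun lam h hne => inf_eq_left.mpr (hWlK lam h hne)
  -- the supremum decomposition of n ⊓ K
  have hsupW : (⨆ lam : {x // x ∈ Sigp}, (gsp lam.1 ⊓ K)) = n ⊓ K := by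
    apply le_antisymm
    · exact iSup_le fun lam => inf_le_inf_right K (hgspn lam.1 lam.2)
    · intro x hx
      obtain ⟨hxn, hxK⟩ := Submodule.mem_inf.mp hx
      have hnsup : n = gsp αl ⊔ (Sigp.erase αl).sup gsp := by
        rw [hn]
        conv_lhs => rw [← Finset.insert_erase hαl]
        rw [Finset.sup_insert]
      have hRK : (Sigp.erase αl).sup gsp ≤ K :=
        Finset.sup_le fun lam hlam =>
          hWlK lam (Finset.mem_of_mem_erase hlam) (Finset.ne_of_mem_erase hlam)
      rw [hnsup] at hxn
      obtain ⟨u, hu, v, hv, huv⟩ := Submodule.mem_sup.mp hxn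
      have hvK : v ∈ K := hRK hv
      have huK : u ∈ K := by
        have hux : u = x - v := by rw [← huv]; abel
        rw [hux]; exact Submodule.sub_mem K hxK hvK
      have hu' : u ∈ ⨆ lam : {x // x ∈ Sigp}, (gsp lam.1 ⊓ K) :=
        Submodule.mem_iSup_of_mem ⟨αl, hαl⟩ (Submodule.mem_inf.mpr ⟨hu, huK⟩)
      have hv' : v ∈ ⨆ lam : {x // x ∈ Sigp}, (gsp lam.1 ⊓ K) := by
        have hle : (Sigp.erase αl).sup gsp ≤
            ⨆ lam : {x // x ∈ Sigp}, (gsp lam.1 ⊓ K) := by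
          apply Finset.sup_le
          intro lam hlam
          have h1 : gsp lam ≤ gsp lam ⊓ K :=
            le_inf le_rfl (hWlK lam (Finset.mem_of_mem_erase hlam)
              (Finset.ne_of_mem_erase hlam))
          exact le_trans h1
            (le_iSup (fun lam : {x // x ∈ Sigp} => gsp lam.1 ⊓ K)
              ⟨lam, Finset.mem_of_mem_erase hlam⟩)
        exact hle hv
      exact huv ▸ Submodule.add_mem _ hu' hv'
  -- orthonormal families
  obtain ⟨f0, hf0mem, hf0on, hf0span⟩ :=
    exists_orthonormal_family cipb (fun x y => by rw [cipb_apply, cipb_apply, hsymm]) W0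
      (fun x _ hx => by rw [cipb_apply]; exact hpos x hx)
  obtain ⟨φ2, φ2_apply⟩ : ∃ b : L →ₗ[ℝ] L →ₗ[ℝ] ℝ, ∀ x y, b x y = 2⁻¹ * cip L θ x y :=
    ⟨(2⁻¹ : ℝ) • cipb, fun x y => by
      rw [LinearMap.smul_apply, LinearMap.smul_apply, smul_eq_mul, cipb_apply]⟩
  have hexσ : ∀ lam : {x // x ∈ Sigp},
      ∃ f : Fin (finrank ℝ ↥(gsp lam.1 ⊓ K)) → L, (∀ j, f j ∈ gsp lam.1 ⊓ K) ∧
        (∀ j k, φ2 (f j) (f k) = if j = k then 1 else 0) ∧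
        Submodule.span ℝ (Set.range f) = gsp lam.1 ⊓ K := by
    intro lam
    refine exists_orthonormal_family φ2
      (fun x y => by rw [φ2_apply, φ2_apply, hsymm]) (gsp lam.1 ⊓ K) ?_
    intro x _ hx
    rw [φ2_apply]
    have := hpos x hx
    linarith
  choose fσ hfσmem hfσon hfσspan using hexσ
  set F : (Fin (finrank ℝ ↥W0)) ⊕
      (Σ lam : {x // x ∈ Sigp}, Fin (finrank ℝ ↥(gsp lam.1 ⊓ K))) → L :=
    Sum.elim f0 (fun p => fσ p.1 p.2) with hFdef
  have hf0a : ∀ j, f0 j ∈ a := fun j => (Submodule.mem_inf.mp (hf0mem j)).1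
  have hfσg : ∀ lam jp, fσ lam jp ∈ gsp lam.1 :=
    fun lam jp => (Submodule.mem_inf.mp (hfσmem lam jp)).1
  have hfσn : ∀ lam jp, fσ lam jp ∈ n := fun lam jp => hgspn lam.1 lam.2 (hfσg lam jp)
  have hFV : ∀ i, F i ∈ V := by
    intro i
    cases i with
    | inl j => exact (le_sup_left : W0 ≤ V) (hf0mem j)
    | inr p =>
      exact (le_sup_right : n ⊓ K ≤ V)
        (inf_le_inf_right K (hgspn p.1.1 p.1.2) (hfσmem p.1 p.2))
  have hFon : ∀ i j, cipAN L θ Pa Pn (F i) (F j) = if i = j then 1 else 0 := by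
    intro i j
    cases i with
    | inl i0 =>
      cases j with
      | inl j0 =>
        show cipAN L θ Pa Pn (f0 i0) (f0 j0) = _
        rw [cipAN_aa _ (hf0a i0) _ (hf0a j0), ← cipb_apply, hf0on i0 j0]
        by_cases h : i0 = j0 <;> simp [h]
      | inr p =>
        show cipAN L θ Pa Pn (f0 i0) (fσ p.1 p.2) = _
        rw [cipAN_an _ (hf0a i0) _ (hfσn p.1 p.2), if_neg (by simp)]
    | inr p =>
      cases j with
      | inl j0 =>
        show cipAN L θ Pa Pn (fσ p.1 p.2) (f0 j0) = _
        rw [hANsymm, cipAN_an _ (hf0a j0) _ (hfσn p.1 p.2), if_neg (by simp)]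
      | inr q =>
        rcases p with ⟨lam, jp⟩
        rcases q with ⟨mu, jq⟩
        show cipAN L θ Pa Pn (fσ lam jp) (fσ mu jq) = _
        by_cases h : lam = mu
        · subst h
          rw [cipAN_nn _ (hfσn lam jp) _ (hfσn lam jq)]
          have h2 := hfσon lam jp jq
          rw [φ2_apply] at h2
          rw [show (1 / 2 : ℝ) = 2⁻¹ by norm_num, h2]
          by_cases hjk : jp = jq <;> simp [hjk]
        · have hval : cip L θ (fσ lam jp) (fσ mu jq) = 0 :=
            horthroots lam.1 lam.2 mu.1 mu.2 (fun hh => h (Subtype.ext hh))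
              _ (hfσg lam jp) _ (hfσg mu jq)
          rw [cipAN_nn _ (hfσn lam jp) _ (hfσn mu jq), hval, mul_zero,
            if_neg (by simp [h])]
  have hFspan : Submodule.span ℝ (Set.range F) = V := by
    rw [hFdef, Set.Sum.elim_range, Submodule.span_union, hf0span]
    congr 1
    rw [Set.range_sigma_eq_iUnion_range, Submodule.span_iUnion]
    rw [show (⨆ lam : {x // x ∈ Sigp},
        Submodule.span ℝ (Set.range fun b => fσ lam b)) =
        ⨆ lam : {x // x ∈ Sigp}, (gsp lam.1 ⊓ K) from iSup_congr (fun lam => hfσspan lam)]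
    exact hsupW
  -- change of orthonormal family
  have hchange : ∑ i, II (e i) (e i) = ∑ i, II (F i) (F i) := by
    refine trace_orthonormal_change ipAN
      (fun x y => by rw [ipAN_apply, ipAN_apply, hANsymm]) II e F ?_ ?_ ?_ ?_
    · intro i j; rw [ipAN_apply]; exact horthonormal i j
    · intro i j; rw [ipAN_apply]; exact hFon i j
    · intro i; rw [hFspan]; exact he i
    · intro j; rw [hspan]; exact hFV j
  -- membership facts in the span {Hα, ξ}
  have hHαspan : Hα ∈ Submodule.span ℝ ({Hα, ξ} : Set L) :=
    Submodule.subset_span (Set.mem_insert _ _)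
  have hξspan : ξ ∈ Submodule.span ℝ ({Hα, ξ} : Set L) :=
    Submodule.subset_span (Set.mem_insert_of_mem _ rfl)
  -- value of the second fundamental form on the adapted family
  have hterm0 : ∀ j, ∀ η ∈ Submodule.span ℝ ({Hα, ξ} : Set L),
      cipAN L θ Pa Pn (II (f0 j) (f0 j)) η = 0 := by
    intro j η hη
    rw [hII _ ((le_sup_left : W0 ≤ V) (hf0mem j)) η hη]
    rw [hap _ (hf0a j), neg_lie, lie_self, neg_zero, show θ 0 = 0 from θ.toLinearMap.map_zero, sub_zero,
      cip_zero_left, mul_zero]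
  have htermσ : ∀ (lam : {x // x ∈ Sigp}) (jp : Fin (finrank ℝ ↥(gsp lam.1 ⊓ K))),
      ∀ η ∈ Submodule.span ℝ ({Hα, ξ} : Set L),
      cipAN L θ Pa Pn (II (fσ lam jp) (fσ lam jp)) η = cip L θ (Hd lam.1) η := by
    intro lam jp η hη
    have hxV : fσ lam jp ∈ V :=
      (le_sup_right : n ⊓ K ≤ V)
        (inf_le_inf_right K (hgspn lam.1 lam.2) (hfσmem lam jp))
    have hxx : cip L θ (fσ lam jp) (fσ lam jp) = 2 := by
      have h2 := hfσon lam jp jp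
      rw [φ2_apply, if_pos rfl] at h2
      linarith
    rw [hII _ hxV η hη, hbrD lam.1 lam.2 _ (hfσg lam jp), hxx]
    have hsm : cip L θ ((2 * (2 : ℝ)) • Hd lam.1) η = (2 * 2) * cip L θ (Hd lam.1) η := by
      rw [← cipb_apply, ← cipb_apply, map_smul, LinearMap.smul_apply, smul_eq_mul]
    rw [hsm]
    ring
  -- total pairing of the mean curvature with η
  have hpairsum : ∀ η ∈ Submodule.span ℝ ({Hα, ξ} : Set L),
      cipAN L θ Pa Pn (∑ i, II (F i) (F i)) η =
        ∑ p : (Σ lam : {x // x ∈ Sigp}, Fin (finrank ℝ ↥(gsp lam.1 ⊓ K))),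
          cip L θ (Hd p.1.1) η := by
    intro η hη
    rw [← ipAN_apply, map_sum, LinearMap.sum_apply]
    rw [Fintype.sum_sum_type]
    have h1 : ∀ j, ipAN (II (F (Sum.inl j)) (F (Sum.inl j))) η = 0 := by
      intro j
      rw [ipAN_apply]
      exact hterm0 j η hη
    have h2 : ∀ p : (Σ lam : {x // x ∈ Sigp}, Fin (finrank ℝ ↥(gsp lam.1 ⊓ K))),
        ipAN (II (F (Sum.inr p)) (F (Sum.inr p))) η = cip L θ (Hd p.1.1) η := by
      intro p
      rw [ipAN_apply]
      exact htermσ p.1 p.2 η hη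
    rw [Finset.sum_congr rfl fun j _ => h1 j, Finset.sum_congr rfl fun p _ => h2 p]
    simp
  -- the ξ-pairing vanishes
  have hsumξ : cipAN L θ Pa Pn (∑ i, II (F i) (F i)) ξ = 0 := by
    rw [hpairsum ξ hξspan]
    exact Finset.sum_eq_zero fun p _ => horthan (Hd p.1.1) (hHd p.1.1 p.1.2).1 ξ hξn
  -- dimension count for g_α ⊓ K
  have hmαnat : finrank ℝ ↥(gsp αl ⊓ K) + 1 = finrank ℝ ↥(gsp αl) := by
    set ψ : ↥(gsp αl) →ₗ[ℝ] ℝ :=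
      ((killingForm ℝ L).flip (θ ξ)).comp (gsp αl).subtype with hψdef
    have hker : LinearMap.ker ψ = Submodule.comap (gsp αl).subtype (gsp αl ⊓ K) := by
      ext x
      rw [LinearMap.mem_ker, Submodule.mem_comap, Submodule.mem_inf]
      constructor
      · intro h
        refine ⟨x.2, ?_⟩
        rw [hKdef, LinearMap.mem_ker]
        exact h
      · rintro ⟨-, hxK⟩
        rw [hKdef, LinearMap.mem_ker] at hxK
        exact hxK
    have h1 : finrank ℝ ↥(LinearMap.ker ψ) = finrank ℝ ↥(gsp αl ⊓ K) := by
      rw [hker]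
      exact LinearEquiv.finrank_eq (Submodule.comapSubtypeEquivOfLe inf_le_left)
    have hψξ : ψ ⟨ξ, hξ⟩ = -1 := by
      have h2 : -(killingForm ℝ L ξ (θ ξ)) = 1 := hnorm
      show killingForm ℝ L ξ (θ ξ) = -1
      linarith
    have hr : LinearMap.range ψ = ⊤ := by
      rw [LinearMap.range_eq_top]
      intro y
      refine ⟨(-y) • ⟨ξ, hξ⟩, ?_⟩
      rw [map_smul, hψξ, smul_eq_mul]
      ring
    have h2 := LinearMap.finrank_range_add_finrank_ker ψ
    rw [hr, finrank_top, Module.finrank_self, h1] at h2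
    omega
  -- the Hα-pairing
  have hsumHα : cipAN L θ Pa Pn (∑ i, II (F i) (F i)) Hα =
      cip L θ Hα Hα *
        ((finrank ℝ ↥(gsp αl) : ℝ) + 2 * (finrank ℝ ↥(gsp ((2:ℝ) • αl)) : ℝ)) -
        cip L θ Hα Hα := by
    rw [hpairsum Hα hHαspan]
    rw [← Finset.univ_sigma_univ, Finset.sum_sigma]
    have hconst : ∀ lam : {x // x ∈ Sigp},
        (∑ _j : Fin (finrank ℝ ↥(gsp lam.1 ⊓ K)), cip L θ (Hd lam.1) Hα) =
          (finrank ℝ ↥(gsp lam.1 ⊓ K) : ℝ) * cip L θ (Hd lam.1) Hα := by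
      intro lam
      rw [Finset.sum_const, Finset.card_univ, Fintype.card_fin, nsmul_eq_mul]
    rw [Finset.sum_congr rfl fun lam _ => hconst lam]
    rw [Finset.sum_coe_sort Sigp
      (fun lam => (finrank ℝ ↥(gsp lam ⊓ K) : ℝ) * cip L θ (Hd lam) Hα)]
    have herase : ∀ lam ∈ Sigp.erase αl,
        (finrank ℝ ↥(gsp lam ⊓ K) : ℝ) * cip L θ (Hd lam) Hα =
          (finrank ℝ ↥(gsp lam) : ℝ) * cip L θ (Hd lam) Hα := by
      intro lam hlam
      rw [hWl_eq lam (Finset.mem_of_mem_erase hlam) (Finset.ne_of_mem_erase hlam)]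
    have hmain : (∑ lam ∈ Sigp, (finrank ℝ ↥(gsp lam) : ℝ) * cip L θ (Hd lam) Hα) =
        cip L θ Hα Hα *
          ((finrank ℝ ↥(gsp αl) : ℝ) + 2 * (finrank ℝ ↥(gsp ((2:ℝ) • αl)) : ℝ)) := by
      rw [← hdelta, ← cipb_apply, map_sum, LinearMap.sum_apply]
      refine Finset.sum_congr rfl fun lam hlam => ?_
      rw [map_smul, LinearMap.smul_apply, smul_eq_mul, cipb_apply]
    have hcast : (finrank ℝ ↥(gsp αl ⊓ K) : ℝ) = (finrank ℝ ↥(gsp αl) : ℝ) - 1 := by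
      have h := congrArg (Nat.cast : ℕ → ℝ) hmαnat
      push_cast at h
      linarith
    calc (∑ lam ∈ Sigp, (finrank ℝ ↥(gsp lam ⊓ K) : ℝ) * cip L θ (Hd lam) Hα)
        = (∑ lam ∈ Sigp.erase αl,
              (finrank ℝ ↥(gsp lam ⊓ K) : ℝ) * cip L θ (Hd lam) Hα) +
            (finrank ℝ ↥(gsp αl ⊓ K) : ℝ) * cip L θ (Hd αl) Hα :=
          (Finset.sum_erase_add Sigp _ hαl).symm
      _ = (∑ lam ∈ Sigp.erase αl,
              (finrank ℝ ↥(gsp lam) : ℝ) * cip L θ (Hd lam) Hα) +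
            ((finrank ℝ ↥(gsp αl) : ℝ) * cip L θ (Hd αl) Hα - cip L θ (Hd αl) Hα) := by
          rw [Finset.sum_congr rfl herase, hcast]; ring
      _ = ((∑ lam ∈ Sigp.erase αl,
              (finrank ℝ ↥(gsp lam) : ℝ) * cip L θ (Hd lam) Hα) +
            (finrank ℝ ↥(gsp αl) : ℝ) * cip L θ (Hd αl) Hα) - cip L θ (Hd αl) Hα := by
          ring
      _ = (∑ lam ∈ Sigp, (finrank ℝ ↥(gsp lam) : ℝ) * cip L θ (Hd lam) Hα) -
            cip L θ (Hd αl) Hα := by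
          rw [Finset.sum_erase_add Sigp _ hαl]
      _ = _ := by rw [hmain, ← hHα]
  -- final assembly
  set c : ℝ := ((finrank ℝ ↥(gsp αl) : ℝ) +
      2 * (finrank ℝ ↥(gsp ((2:ℝ) • αl)) : ℝ)) - 1 with hcdef
  rw [hchange]
  have hSmem : (∑ i, II (F i) (F i)) ∈ Submodule.span ℝ ({Hα, ξ} : Set L) :=
    Submodule.sum_mem _ fun i _ => hIIval (F i) (hFV i)
  have hZmem : (∑ i, II (F i) (F i)) - c • Hα ∈ Submodule.span ℝ ({Hα, ξ} : Set L) :=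
    Submodule.sub_mem _ hSmem (Submodule.smul_mem _ c hHαspan)
  obtain ⟨s, t, hst⟩ := Submodule.mem_span_pair.mp hZmem
  have hANHαξ : cipAN L θ Pa Pn Hα ξ = 0 := cipAN_an _ hHαa _ hξn
  have hANξHα : cipAN L θ Pa Pn ξ Hα = 0 := by rw [hANsymm]; exact hANHαξ
  have hANξξ : cipAN L θ Pa Pn ξ ξ = 1/2 := by
    rw [cipAN_nn _ hξn _ hξn, hnorm]; ring
  have hANHαHα : cipAN L θ Pa Pn Hα Hα = cip L θ Hα Hα := cipAN_aa _ hHαa _ hHαa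
  have hpairZ : ∀ η : L, cipAN L θ Pa Pn ((∑ i, II (F i) (F i)) - c • Hα) η =
      cipAN L θ Pa Pn (∑ i, II (F i) (F i)) η - c * cipAN L θ Pa Pn Hα η := by
    intro η
    rw [← ipAN_apply, ← ipAN_apply, ← ipAN_apply, map_sub, map_smul,
      LinearMap.sub_apply, LinearMap.smul_apply, smul_eq_mul]
  have hpairst : ∀ η : L, cipAN L θ Pa Pn (s • Hα + t • ξ) η =
      s * cipAN L θ Pa Pn Hα η + t * cipAN L θ Pa Pn ξ η := by
    intro η
    rw [← ipAN_apply, ← ipAN_apply, ← ipAN_apply, map_add, map_smul, map_smul,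
      LinearMap.add_apply, LinearMap.smul_apply, LinearMap.smul_apply,
      smul_eq_mul, smul_eq_mul]
  have ht : t = 0 := by
    have h1 := hpairst ξ
    rw [hst, hpairZ ξ, hsumξ, hANHαξ, hANξξ] at h1
    linarith
  have hsH : s * cip L θ Hα Hα = 0 := by
    have h1 := hpairst Hα
    rw [hst, hpairZ Hα, hsumHα, hANHαHα, hANξHα, ht] at h1
    rw [hcdef] at h1
    linear_combination -h1
  have hfinal : (∑ i, II (F i) (F i)) - c • Hα = 0 := by
    rw [← hst, ht]
    rcases eq_or_ne Hα 0 with h0 | h0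
    · rw [h0]; simp
    · have hs0 : s = 0 := by
        rcases mul_eq_zero.mp hsH with h | h
        · exact h
        · exact absurd h (ne_of_gt (hpos Hα h0))
      rw [hs0]; simp
  exact sub_eq_zero.mp hfinal
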